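/- Let c > 0 and fix a discretization with δ_x/δ_s ≤ c. Then for every g ∈ L²(S): ‖R_δ^{pd,*} g‖²_{L²(Ω)} ≤ 4√2·π·(c + 1)·‖g‖²_{L²(S)}. In particular, the operator norm of the pixel-driven backprojection R_δ^{pd,*} : L²(S) → L²(Ω) is at most √(4√2·π·(c+1)), uniformly over all such discretizations. -/

import Mathlib

open MeasureTheory Real Set Filter
open scoped BigOperators ENNReal Topology

noncomputable section

/-- The spatial domain: the open Euclidean unit ball in the plane. -/
def Omg : Set (ℝ × ℝ) := {x : ℝ × ℝ | x.1 ^ 2 + x.2 ^ 2 < 1}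

/-- The sinogram domain `[0,π) × (−1,1)`. -/
def Sino : Set (ℝ × ℝ) := Ico (0 : ℝ) π ×ˢ Ioo (-1 : ℝ) 1

/-- `κ(φ) = min(1/|cos φ|, 1/|sin φ|)`. -/
def kap (φ : ℝ) : ℝ := min (1 / |cos φ|) (1 / |sin φ|)

/-- `s̄(φ) = (δ_x/2)(|cos φ| + |sin φ|)`. -/
def sbar (dx φ : ℝ) : ℝ := dx / 2 * (|cos φ| + |sin φ|)

/-- `s̲(φ) = (δ_x/2)·||cos φ| − |sin φ||`. -/
def sund (dx φ : ℝ) : ℝ := dx / 2 * |(|cos φ| - |sin φ|)|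

open Classical in
/-- The ray-driven weight function `ω^rd(φ,t)` (for spatial resolution `dx`). -/
def wrd (dx φ t : ℝ) : ℝ :=
  (1 / dx) *
    (if |t| < sund dx φ then kap φ
    else if |t| < sbar dx φ then (sbar dx φ - |t|) / (dx * |cos φ * sin φ|)
    else if (∃ k : ℤ, φ = k * (π / 2)) ∧ |t| = sbar dx φ then 1 / 2
    else 0)

/-- The pixel-driven weight function `ω^pd(t)` (for detector resolution `ds`). -/
def wpd (ds t : ℝ) : ℝ := (1 / ds ^ 2) * max (ds - |t|) 0

/-- The Radon transform, as a pointwise line-integral formula: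
`[Rf](φ,s) = ∫ f(s·θ_φ + t·θ_φ^⊥) dt`. -/
def Radon (f : ℝ × ℝ → ℝ) (φ s : ℝ) : ℝ :=
  ∫ t : ℝ, f (s * cos φ - t * sin φ, s * sin φ + t * cos φ)

/-- The backprojection `[R*g](x) = ∫_0^π g(φ, x·θ_φ) dφ`. -/
def Backproj (g : ℝ × ℝ → ℝ) (x : ℝ × ℝ) : ℝ :=
  ∫ φ in Ico (0 : ℝ) π, g (φ, x.1 * cos φ + x.2 * sin φ)

/-- A discretization: spatial resolution `N_x`, detector resolution `N_s`, and
`N_φ` strictly increasing angles in `[0,π)`. -/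
structure Disc where
  Nx : ℕ
  Nx_pos : 0 < Nx
  Ns : ℕ
  Ns_pos : 0 < Ns
  Nphi : ℕ
  Nphi_pos : 0 < Nphi
  ang : ℕ → ℝ
  ang_mono : ∀ q q', q < q' → q' < Nphi → ang q < ang q'
  ang_mem : ∀ q, q < Nphi → ang q ∈ Ico (0 : ℝ) π

namespace Disc

variable (D : Disc)

/-- Spatial resolution `δ_x = 2/N_x`. -/
def dx : ℝ := 2 / D.Nx

/-- Detector resolution `δ_s = 2/N_s`. -/
def ds : ℝ := 2 / D.Ns

/-- Pixel centers `x_{ij}`. -/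
def xc (i j : ℕ) : ℝ × ℝ := ((i + 1 / 2) * D.dx - 1, (j + 1 / 2) * D.dx - 1)

/-- Spatial pixels `X_{ij}` (closed squares with center `x_{ij}` and side `δ_x`). -/
def Xpix (i j : ℕ) : Set (ℝ × ℝ) :=
  Icc ((D.xc i j).1 - D.dx / 2) ((D.xc i j).1 + D.dx / 2) ×ˢ
    Icc ((D.xc i j).2 - D.dx / 2) ((D.xc i j).2 + D.dx / 2)

/-- Detector pixel centers `s_p`. -/
def sc (p : ℕ) : ℝ := (p + 1 / 2) * D.ds - 1

/-- Detector pixels `S_p`. -/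
def Spix (p : ℕ) : Set ℝ := Ico (D.sc p - D.ds / 2) (D.sc p + D.ds / 2)

/-- Lower endpoint of the angular pixel `Φ_q`. -/
def philow (q : ℕ) : ℝ := if q = 0 then 0 else (D.ang (q - 1) + D.ang q) / 2

/-- Upper endpoint of the angular pixel `Φ_q`. -/
def phihigh (q : ℕ) : ℝ := if q = D.Nphi - 1 then π else (D.ang q + D.ang (q + 1)) / 2

/-- Angular pixels `Φ_q`. -/
def Phipix (q : ℕ) : Set ℝ := Ico (D.philow q) (D.phihigh q)

/-- Angular resolution `δ_φ = max_q |Φ_q|`. -/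
def dphi : ℝ :=
  (Finset.range D.Nphi).sup' (Finset.nonempty_range_iff.mpr D.Nphi_pos.ne')
    fun q => D.phihigh q - D.philow q

/-- The argument `x_{ij}·θ_q − s_p` at which weights are evaluated. -/
def off (i j q p : ℕ) : ℝ :=
  (D.xc i j).1 * cos (D.ang q) + (D.xc i j).2 * sin (D.ang q) - D.sc p

/-- Generic convolutional discretization of the Radon transform with weight `w`. -/
def discRadon (w : ℝ → ℝ → ℝ) (f : ℝ × ℝ → ℝ) (y : ℝ × ℝ) : ℝ :=
  ∑ q ∈ Finset.range D.Nphi, ∑ p ∈ Finset.range D.Ns,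
    Set.indicator (D.Phipix q ×ˢ D.Spix p) (fun _ => (1 : ℝ)) y *
      ∑ i ∈ Finset.range D.Nx, ∑ j ∈ Finset.range D.Nx,
        w (D.ang q) (D.off i j q p) * ∫ x in D.Xpix i j, f x

/-- Generic convolutional discretization of the backprojection with weight `w`. -/
def discBackproj (w : ℝ → ℝ → ℝ) (g : ℝ × ℝ → ℝ) (x : ℝ × ℝ) : ℝ :=
  ∑ i ∈ Finset.range D.Nx, ∑ j ∈ Finset.range D.Nx,
    Set.indicator (D.Xpix i j) (fun _ => (1 : ℝ)) x *
      ∑ q ∈ Finset.range D.Nphi, ∑ p ∈ Finset.range D.Ns,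
        w (D.ang q) (D.off i j q p) * ∫ y in D.Phipix q ×ˢ D.Spix p, g y

end Disc

section AuxPD

lemma wpd_nonneg (ds t : ℝ) : 0 ≤ wpd ds t := by
  unfold wpd; positivity

lemma wpd_neg_arg (ds t : ℝ) : wpd ds (-t) = wpd ds t := by simp [wpd]

lemma wpd_le (ds t : ℝ) (hds : 0 < ds) : wpd ds t ≤ 1 / ds := by
  unfold wpd
  have h1 : max (ds - |t|) 0 ≤ ds := max_le (by linarith [abs_nonneg t]) hds.le
  have h2 : (0:ℝ) < ds ^ 2 := by positivity
  calc 1 / ds ^ 2 * max (ds - |t|) 0 ≤ 1 / ds ^2 * ds := by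
        apply mul_le_mul_of_nonneg_left h1 (by positivity)
    _ = 1 / ds := by field_simp

lemma vol_Ico_inter_Ico (a b L : ℝ) :
    volume (Ico (a - L/2) (a + L/2) ∩ Ico (b - L/2) (b + L/2))
      = ENNReal.ofReal (L - |a - b|) := by
  rw [Set.Ico_inter_Ico, Real.volume_Ico]
  congr 1
  have h1 : min (a + L/2) (b + L/2) = min a b + L/2 := min_add_add_right a b (L/2)
  have h2 : max (a - L/2) (b - L/2) = max a b - L/2 := max_sub_sub_right a b (L/2)
  have h3 : max a b - min a b = |a - b| := max_sub_min_eq_abs' a b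
  rw [h1, h2]; linarith

/-- Sum of hat weights over any family of detector centers is at most `1/ds`. -/
lemma sum_wpd_sc_le (D : Disc) (t : ℝ) :
    ∑ p ∈ Finset.range D.Ns, wpd D.ds (t - D.sc p) ≤ 1 / D.ds := by
  have hds : 0 < D.ds := by
    have : (0:ℝ) < D.Ns := by exact_mod_cast D.Ns_pos
    unfold Disc.ds; positivity
  set ds := D.ds with hdsdef
  -- the key real inequality
  have key : ∑ p ∈ Finset.range D.Ns, max (ds - |t - D.sc p|) 0 ≤ ds := by
    have hofReal : ∀ p : ℕ,
        ENNReal.ofReal (max (ds - |t - D.sc p|) 0)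
          = volume (Ico (t - ds/2) (t + ds/2) ∩ Ico (D.sc p - ds/2) (D.sc p + ds/2)) := by
      intro p
      rw [vol_Ico_inter_Ico]
      rcases le_total 0 (ds - |t - D.sc p|) with h | h
      · rw [max_eq_left h]
      · rw [max_eq_right h, ENNReal.ofReal_zero, ENNReal.ofReal_eq_zero.mpr h]
    have hdisj : (↑(Finset.range D.Ns) : Set ℕ).PairwiseDisjoint
        (fun p => Ico (t - ds/2) (t + ds/2) ∩ Ico (D.sc p - ds/2) (D.sc p + ds/2)) := by
      intro p _ p' _ hne
      have hsc : ∀ u v : ℕ, u < v → D.sc u + ds/2 ≤ D.sc v - ds/2 := by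
        intro u v huv
        unfold Disc.sc
        have : ((u:ℝ) + 1) ≤ (v:ℝ) := by exact_mod_cast huv
        nlinarith
      have : Disjoint (Ico (D.sc p - ds/2) (D.sc p + ds/2))
          (Ico (D.sc p' - ds/2) (D.sc p' + ds/2)) := by
        rcases hne.lt_or_gt with h | h
        · exact Set.Ico_disjoint_Ico.mpr
            (le_trans (min_le_left _ _) (le_trans (hsc p p' h) (le_max_right _ _)))
        · exact Set.Ico_disjoint_Ico.mpr
            (le_trans (min_le_right _ _) (le_trans (hsc p' p h) (le_max_left _ _)))
      exact Disjoint.mono inter_subset_right inter_subset_right this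
    have hsum : ∑ p ∈ Finset.range D.Ns,
        volume (Ico (t - ds/2) (t + ds/2) ∩ Ico (D.sc p - ds/2) (D.sc p + ds/2))
          ≤ ENNReal.ofReal ds := by
      rw [← measure_biUnion_finset hdisj
        (fun p _ => (measurableSet_Ico.inter measurableSet_Ico))]
      calc volume (⋃ p ∈ Finset.range D.Ns,
            Ico (t - ds/2) (t + ds/2) ∩ Ico (D.sc p - ds/2) (D.sc p + ds/2))
          ≤ volume (Ico (t - ds/2) (t + ds/2)) := by
            apply measure_mono
            exact Set.iUnion₂_subset (fun p _ => inter_subset_left)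
        _ = ENNReal.ofReal ds := by rw [Real.volume_Ico]; congr 1; ring
    exact (ENNReal.ofReal_le_ofReal_iff hds.le).mp (by
      rw [ENNReal.ofReal_sum_of_nonneg (fun p _ => le_max_right _ 0)]
      simp_rw [hofReal]; exact hsum)
  calc ∑ p ∈ Finset.range D.Ns, wpd ds (t - D.sc p)
      = 1/ds^2 * ∑ p ∈ Finset.range D.Ns, max (ds - |t - D.sc p|) 0 := by
        rw [Finset.mul_sum]; rfl
    _ ≤ 1/ds^2 * ds := mul_le_mul_of_nonneg_left key (by positivity)
    _ = 1/ds := by field_simp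

end AuxPD
section AuxRow

/-- Sum of hat weights along an arithmetic progression with positive step `α`. -/
lemma sum_wpd_row_le (N : ℕ) (ds α β : ℝ) (hds : 0 < ds) (hα : 0 < α) :
    ∑ i ∈ Finset.range N, wpd ds (α * i + β) ≤ (2 * ds + α) / (ds * α) := by
  set J : ℕ → Set ℝ := fun i => Ico (β + α * i) (β + α * (i+1)) with hJ
  set W : Set ℝ := Ioo (-ds) (ds + α) with hW
  have hterm : ∀ i : ℕ, wpd ds (α * i + β) ≤ (1/(ds*α)) * (volume (J i ∩ W)).toReal := by
    intro i
    by_cases h : |α * i + β| < ds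
    · have hsub : J i ⊆ W := by
        intro y hy
        simp only [hJ, hW, mem_Ico, mem_Ioo] at hy ⊢
        have h1 := abs_lt.mp h
        constructor
        · nlinarith [hy.1]
        · nlinarith [hy.2]
      have : volume (J i ∩ W) = ENNReal.ofReal α := by
        rw [Set.inter_eq_self_of_subset_left hsub, Real.volume_Ico]
        congr 1; ring
      rw [this, ENNReal.toReal_ofReal hα.le]
      calc wpd ds (α * i + β) ≤ 1 / ds := wpd_le ds _ hds
        _ = 1/(ds*α) * α := by field_simp
    · have : wpd ds (α * i + β) = 0 := by
        unfold wpd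
        rw [max_eq_right (by push_neg at h; linarith)]
        ring
      rw [this]
      positivity
  have hsum2 : ∑ i ∈ Finset.range N, (volume (J i ∩ W)).toReal ≤ 2 * ds + α := by
    have hfin : ∀ i : ℕ, volume (J i ∩ W) ≠ ∞ := by
      intro i
      refine ne_top_of_le_ne_top ?_ (measure_mono inter_subset_right)
      rw [hW, Real.volume_Ioo]
      exact ENNReal.ofReal_ne_top
    have hdisj : (↑(Finset.range N) : Set ℕ).PairwiseDisjoint (fun i => J i ∩ W) := by
      intro i _ i' _ hne
      have hd : ∀ u v : ℕ, u < v → Disjoint (J u) (J v) := by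
        intro u v huv
        apply Set.Ico_disjoint_Ico.mpr
        have : ((u:ℝ) + 1) ≤ (v:ℝ) := by exact_mod_cast huv
        refine le_trans (min_le_left _ _) (le_trans ?_ (le_max_right _ _))
        nlinarith
      rcases hne.lt_or_gt with h | h
      · exact Disjoint.mono inter_subset_left inter_subset_left (hd i i' h)
      · exact Disjoint.mono inter_subset_left inter_subset_left (hd i' i h).symm
    rw [← ENNReal.toReal_sum (fun i _ => hfin i)]
    have hle : ∑ i ∈ Finset.range N, volume (J i ∩ W) ≤ ENNReal.ofReal (2*ds + α) := by
      rw [← measure_biUnion_finset hdisj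
        (fun i _ => (measurableSet_Ico.inter measurableSet_Ioo))]
      calc volume (⋃ i ∈ Finset.range N, J i ∩ W) ≤ volume W := by
            apply measure_mono
            exact Set.iUnion₂_subset (fun i _ => inter_subset_right)
        _ = ENNReal.ofReal (2*ds+α) := by rw [hW, Real.volume_Ioo]; congr 1; ring
    calc (∑ i ∈ Finset.range N, volume (J i ∩ W)).toReal
        ≤ (ENNReal.ofReal (2*ds+α)).toReal := by
          apply ENNReal.toReal_mono ENNReal.ofReal_ne_top hle
      _ = 2*ds+α := ENNReal.toReal_ofReal (by positivity)
  calc ∑ i ∈ Finset.range N, wpd ds (α * i + β)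
      ≤ ∑ i ∈ Finset.range N, (1/(ds*α)) * (volume (J i ∩ W)).toReal :=
        Finset.sum_le_sum (fun i _ => hterm i)
    _ = (1/(ds*α)) * ∑ i ∈ Finset.range N, (volume (J i ∩ W)).toReal := by
        rw [Finset.mul_sum]
    _ ≤ (1/(ds*α)) * (2*ds+α) := by
        apply mul_le_mul_of_nonneg_left hsum2 (by positivity)
    _ = (2 * ds + α) / (ds * α) := by ring

lemma sum_wpd_row_le' (N : ℕ) (ds α β : ℝ) (hds : 0 < ds) (hα : α ≠ 0) :
    ∑ i ∈ Finset.range N, wpd ds (α * i + β) ≤ (2 * ds + |α|) / (ds * |α|) := by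
  rcases hα.lt_or_gt with h | h
  · have heq : ∀ i : ℕ, wpd ds (α * i + β) = wpd ds ((-α) * i + (-β)) := by
      intro i
      rw [show (-α) * i + (-β) = -(α * i + β) by ring, wpd_neg_arg]
    simp_rw [heq]
    rw [abs_of_neg h]
    exact sum_wpd_row_le N ds (-α) (-β) hds (by linarith)
  · rw [abs_of_pos h]
    exact sum_wpd_row_le N ds α β hds h

end AuxRow
section AuxGrid

lemma Disc.dx_pos (D : Disc) : 0 < D.dx := by
  have : (0:ℝ) < D.Nx := by exact_mod_cast D.Nx_pos
  unfold Disc.dx; positivity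

lemma Disc.ds_pos (D : Disc) : 0 < D.ds := by
  have : (0:ℝ) < D.Ns := by exact_mod_cast D.Ns_pos
  unfold Disc.ds; positivity

lemma Disc.Nx_mul_dx (D : Disc) : (D.Nx : ℝ) * D.dx = 2 := by
  have : (D.Nx : ℝ) ≠ 0 := by exact_mod_cast D.Nx_pos.ne'
  unfold Disc.dx; field_simp

lemma one_le_sqrt_two : (1:ℝ) ≤ Real.sqrt 2 := by
  nlinarith [Real.sq_sqrt (by norm_num : (0:ℝ) ≤ 2), Real.sqrt_nonneg 2]

/-- The grid-count estimate: `δx² Σ_{ij} ω^pd(off) ≤ 4√2 + 2 δx/δs`. -/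
lemma dx2_sum_wpd_le (D : Disc) (q p : ℕ) :
    D.dx^2 * ∑ i ∈ Finset.range D.Nx, ∑ j ∈ Finset.range D.Nx, wpd D.ds (D.off i j q p)
      ≤ 4 * Real.sqrt 2 + 2 * (D.dx / D.ds) := by
  have hdx := D.dx_pos
  have hds := D.ds_pos
  set φ := D.ang q with hφ
  have hpyth : Real.cos φ ^ 2 + Real.sin φ ^ 2 = 1 := by
    rw [add_comm]; exact Real.sin_sq_add_cos_sq φ
  -- a generic bound given a trig value γ with |γ| ≥ 1/√2 along one axis
  have core : ∀ γ : ℝ, Real.sqrt 2 * |γ| ≥ 1 →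
      (∀ N, (2 * D.ds + D.dx * |γ|) / (D.ds * (D.dx * |γ|)) * N ≤ (N:ℝ) * ((2 * D.ds + D.dx * |γ|) / (D.ds * (D.dx * |γ|)))) := by
    intro γ hγ N; rw [mul_comm]
  -- main case split
  have habs : ∀ γ : ℝ, 2 * γ^2 ≥ 1 → Real.sqrt 2 * |γ| ≥ 1 := by
    intro γ hγ
    have hs : (Real.sqrt 2 * |γ|)^2 ≥ 1 := by
      rw [mul_pow, Real.sq_sqrt (by norm_num : (0:ℝ) ≤ 2), sq_abs]; linarith
    nlinarith [mul_nonneg (Real.sqrt_nonneg 2) (abs_nonneg γ)]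
  have final : ∀ γ : ℝ, Real.sqrt 2 * |γ| ≥ 1 →
      D.dx^2 * ((D.Nx : ℝ) * ((2 * D.ds + D.dx * |γ|) / (D.ds * (D.dx * |γ|))))
        ≤ 4 * Real.sqrt 2 + 2 * (D.dx / D.ds) := by
    intro γ hγ
    have hγ0 : 0 < |γ| := by
      by_contra h
      push_neg at h
      have : |γ| = 0 := le_antisymm h (abs_nonneg γ)
      rw [this, mul_zero] at hγ; linarith
    have h2 : D.dx^2 * ((D.Nx : ℝ) * ((2 * D.ds + D.dx * |γ|) / (D.ds * (D.dx * |γ|))))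
        = 2 * D.dx * ((2 * D.ds + D.dx * |γ|) / (D.ds * (D.dx * |γ|))) := by
      have h3 : D.dx ^2 * (D.Nx:ℝ) = 2 * D.dx := by
        have := D.Nx_mul_dx; nlinarith
      rw [show D.dx^2 * ((D.Nx : ℝ) * ((2 * D.ds + D.dx * |γ|) / (D.ds * (D.dx * |γ|))))
        = (D.dx^2 * (D.Nx:ℝ)) * ((2 * D.ds + D.dx * |γ|) / (D.ds * (D.dx * |γ|))) by ring, h3]
    rw [h2]
    have hexp : 2 * D.dx * ((2 * D.ds + D.dx * |γ|) / (D.ds * (D.dx * |γ|)))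
        = 4 / |γ| + 2 * (D.dx / D.ds) := by
      field_simp
      ring
    rw [hexp]
    have h4 : 4 / |γ| ≤ 4 * Real.sqrt 2 := by
      rw [div_le_iff₀ hγ0]
      nlinarith
    linarith
  rcases le_total (|Real.sin φ|) (|Real.cos φ|) with hcase | hcase
  · -- use cosine direction; sum over i inside
    have hγ : Real.sqrt 2 * |Real.cos φ| ≥ 1 := by
      apply habs
      nlinarith [sq_abs (Real.sin φ), sq_abs (Real.cos φ), abs_nonneg (Real.sin φ), abs_nonneg (Real.cos φ)]
    have hcos0 : Real.cos φ ≠ 0 := by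
      intro h
      rw [h, abs_zero, mul_zero] at hγ; linarith
    have hswap : ∑ i ∈ Finset.range D.Nx, ∑ j ∈ Finset.range D.Nx, wpd D.ds (D.off i j q p)
        = ∑ j ∈ Finset.range D.Nx, ∑ i ∈ Finset.range D.Nx, wpd D.ds (D.off i j q p) :=
      Finset.sum_comm
    have hform : ∀ i j : ℕ, D.off i j q p
        = (D.dx * Real.cos φ) * i + ((1/2) * D.dx * Real.cos φ - Real.cos φ
            + ((j + 1/2) * D.dx - 1) * Real.sin φ - D.sc p) := by
      intro i j
      simp only [Disc.off, Disc.xc, hφ]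
      ring
    have hinner : ∀ j : ℕ, ∑ i ∈ Finset.range D.Nx, wpd D.ds (D.off i j q p)
        ≤ (2 * D.ds + D.dx * |Real.cos φ|) / (D.ds * (D.dx * |Real.cos φ|)) := by
      intro j
      calc ∑ i ∈ Finset.range D.Nx, wpd D.ds (D.off i j q p)
          = ∑ i ∈ Finset.range D.Nx, wpd D.ds ((D.dx * Real.cos φ) * i
              + ((1/2) * D.dx * Real.cos φ - Real.cos φ
                + ((j + 1/2) * D.dx - 1) * Real.sin φ - D.sc p)) := by
            apply Finset.sum_congr rfl; intro i _; rw [hform i j]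
        _ ≤ (2 * D.ds + |D.dx * Real.cos φ|) / (D.ds * |D.dx * Real.cos φ|) :=
            sum_wpd_row_le' D.Nx D.ds _ _ hds (by
              intro h
              exact hcos0 (by
                have := mul_eq_zero.mp h
                rcases this with h' | h'
                · exact absurd h' hdx.ne'
                · exact h'))
        _ = (2 * D.ds + D.dx * |Real.cos φ|) / (D.ds * (D.dx * |Real.cos φ|)) := by
            rw [abs_mul, abs_of_pos hdx]
    calc D.dx^2 * ∑ i ∈ Finset.range D.Nx, ∑ j ∈ Finset.range D.Nx, wpd D.ds (D.off i j q p)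
        = D.dx^2 * ∑ j ∈ Finset.range D.Nx, ∑ i ∈ Finset.range D.Nx, wpd D.ds (D.off i j q p) := by
          rw [hswap]
      _ ≤ D.dx^2 * ((D.Nx:ℝ) * ((2 * D.ds + D.dx * |Real.cos φ|) / (D.ds * (D.dx * |Real.cos φ|)))) := by
          apply mul_le_mul_of_nonneg_left _ (by positivity)
          calc ∑ j ∈ Finset.range D.Nx, ∑ i ∈ Finset.range D.Nx, wpd D.ds (D.off i j q p)
              ≤ ∑ j ∈ Finset.range D.Nx, ((2 * D.ds + D.dx * |Real.cos φ|) / (D.ds * (D.dx * |Real.cos φ|))) :=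
                Finset.sum_le_sum (fun j _ => hinner j)
            _ = (D.Nx:ℝ) * ((2 * D.ds + D.dx * |Real.cos φ|) / (D.ds * (D.dx * |Real.cos φ|))) := by
                rw [Finset.sum_const, Finset.card_range, nsmul_eq_mul]
      _ ≤ 4 * Real.sqrt 2 + 2 * (D.dx / D.ds) := final _ hγ
  · -- use sine direction; sum over j inside
    have hγ : Real.sqrt 2 * |Real.sin φ| ≥ 1 := by
      apply habs
      nlinarith [sq_abs (Real.sin φ), sq_abs (Real.cos φ), abs_nonneg (Real.sin φ), abs_nonneg (Real.cos φ)]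
    have hsin0 : Real.sin φ ≠ 0 := by
      intro h
      rw [h, abs_zero, mul_zero] at hγ; linarith
    have hform : ∀ i j : ℕ, D.off i j q p
        = (D.dx * Real.sin φ) * j + ((1/2) * D.dx * Real.sin φ - Real.sin φ
            + ((i + 1/2) * D.dx - 1) * Real.cos φ - D.sc p) := by
      intro i j
      simp only [Disc.off, Disc.xc, hφ]
      ring
    have hinner : ∀ i : ℕ, ∑ j ∈ Finset.range D.Nx, wpd D.ds (D.off i j q p)
        ≤ (2 * D.ds + D.dx * |Real.sin φ|) / (D.ds * (D.dx * |Real.sin φ|)) := by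
      intro i
      calc ∑ j ∈ Finset.range D.Nx, wpd D.ds (D.off i j q p)
          = ∑ j ∈ Finset.range D.Nx, wpd D.ds ((D.dx * Real.sin φ) * j
              + ((1/2) * D.dx * Real.sin φ - Real.sin φ
                + ((i + 1/2) * D.dx - 1) * Real.cos φ - D.sc p)) := by
            apply Finset.sum_congr rfl; intro j _; rw [hform i j]
        _ ≤ (2 * D.ds + |D.dx * Real.sin φ|) / (D.ds * |D.dx * Real.sin φ|) :=
            sum_wpd_row_le' D.Nx D.ds _ _ hds (by
              intro h
              exact hsin0 (by
                have := mul_eq_zero.mp h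
                rcases this with h' | h'
                · exact absurd h' hdx.ne'
                · exact h'))
        _ = (2 * D.ds + D.dx * |Real.sin φ|) / (D.ds * (D.dx * |Real.sin φ|)) := by
            rw [abs_mul, abs_of_pos hdx]
    calc D.dx^2 * ∑ i ∈ Finset.range D.Nx, ∑ j ∈ Finset.range D.Nx, wpd D.ds (D.off i j q p)
        ≤ D.dx^2 * ((D.Nx:ℝ) * ((2 * D.ds + D.dx * |Real.sin φ|) / (D.ds * (D.dx * |Real.sin φ|)))) := by
          apply mul_le_mul_of_nonneg_left _ (by positivity)
          calc ∑ i ∈ Finset.range D.Nx, ∑ j ∈ Finset.range D.Nx, wpd D.ds (D.off i j q p)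
              ≤ ∑ i ∈ Finset.range D.Nx, ((2 * D.ds + D.dx * |Real.sin φ|) / (D.ds * (D.dx * |Real.sin φ|))) :=
                Finset.sum_le_sum (fun i _ => hinner i)
            _ = (D.Nx:ℝ) * ((2 * D.ds + D.dx * |Real.sin φ|) / (D.ds * (D.dx * |Real.sin φ|))) := by
                rw [Finset.sum_const, Finset.card_range, nsmul_eq_mul]
      _ ≤ 4 * Real.sqrt 2 + 2 * (D.dx / D.ds) := final _ hγ

end AuxGrid
section AuxAng

/-- Auxiliary endpoint function for the angular pixels. -/
def Disc.Fang (D : Disc) (k : ℕ) : ℝ := if k < D.Nphi then D.philow k else π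

lemma Disc.philow_le_ang (D : Disc) (k : ℕ) (hk : k < D.Nphi) : D.philow k ≤ D.ang k := by
  unfold Disc.philow
  by_cases h : k = 0
  · simp only [h, if_pos rfl]
    exact (D.ang_mem 0 D.Nphi_pos).1
  · rw [if_neg h]
    have : D.ang (k-1) < D.ang k := D.ang_mono (k-1) k (by omega) hk
    linarith

lemma Disc.Fang_zero (D : Disc) : D.Fang 0 = 0 := by
  unfold Disc.Fang Disc.philow
  rw [if_pos D.Nphi_pos, if_pos rfl]

lemma Disc.phihigh_eq_Fang (D : Disc) (q : ℕ) (hq : q < D.Nphi) :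
    D.phihigh q = D.Fang (q+1) := by
  unfold Disc.Fang Disc.phihigh
  by_cases h : q = D.Nphi - 1
  · have h1 : q + 1 = D.Nphi := by omega
    rw [if_pos h, if_neg (by omega)]
  · have h1 : q + 1 < D.Nphi := by omega
    rw [if_neg h, if_pos h1]
    unfold Disc.philow
    rw [if_neg (by omega)]
    simp

lemma Disc.philow_eq_Fang (D : Disc) (q : ℕ) (hq : q < D.Nphi) :
    D.philow q = D.Fang q := by
  unfold Disc.Fang; rw [if_pos hq]

lemma Disc.Fang_mono (D : Disc) : Monotone D.Fang := by
  apply monotone_nat_of_le_succ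
  intro k
  unfold Disc.Fang
  by_cases h1 : k + 1 < D.Nphi
  · rw [if_pos (by omega), if_pos h1]
    have h2 : D.philow (k+1) = (D.ang k + D.ang (k+1))/2 := by
      unfold Disc.philow; rw [if_neg (by omega)]; simp
    have h3 : D.ang k < D.ang (k+1) := D.ang_mono k (k+1) (by omega) h1
    have h4 := D.philow_le_ang k (by omega)
    rw [h2]; linarith
  · by_cases h2 : k < D.Nphi
    · rw [if_pos h2, if_neg h1]
      have := D.philow_le_ang k h2
      have := (D.ang_mem k h2).2
      linarith
    · rw [if_neg h2, if_neg h1]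

lemma Disc.len_nonneg (D : Disc) (q : ℕ) (hq : q < D.Nphi) :
    0 ≤ D.phihigh q - D.philow q := by
  rw [D.phihigh_eq_Fang q hq, D.philow_eq_Fang q hq]
  have := D.Fang_mono (Nat.le_succ q)
  linarith

lemma Disc.sum_len (D : Disc) :
    ∑ q ∈ Finset.range D.Nphi, (D.phihigh q - D.philow q) = π := by
  have : ∀ q ∈ Finset.range D.Nphi, D.phihigh q - D.philow q = D.Fang (q+1) - D.Fang q := by
    intro q hq
    rw [D.phihigh_eq_Fang q (Finset.mem_range.mp hq), D.philow_eq_Fang q (Finset.mem_range.mp hq)]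
  rw [Finset.sum_congr rfl this, Finset.sum_range_sub D.Fang, D.Fang_zero]
  unfold Disc.Fang
  rw [if_neg (lt_irrefl _)]
  ring

lemma Disc.phipix_disjoint (D : Disc) (q q' : ℕ) (hq : q < D.Nphi) (hq' : q' < D.Nphi)
    (hne : q ≠ q') : Disjoint (D.Phipix q) (D.Phipix q') := by
  have key : ∀ u v : ℕ, u < v → v < D.Nphi → D.phihigh u ≤ D.philow v := by
    intro u v huv hv
    rw [D.phihigh_eq_Fang u (lt_trans huv hv), D.philow_eq_Fang v hv]
    exact D.Fang_mono huv
  unfold Disc.Phipix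
  rcases hne.lt_or_gt with h | h
  · exact Set.Ico_disjoint_Ico.mpr
      (le_trans (min_le_left _ _) (le_trans (key q q' h hq') (le_max_right _ _)))
  · exact Set.Ico_disjoint_Ico.mpr
      (le_trans (min_le_right _ _) (le_trans (key q' q h hq) (le_max_left _ _)))

lemma Disc.spix_disjoint (D : Disc) (p p' : ℕ) (hne : p ≠ p') :
    Disjoint (D.Spix p) (D.Spix p') := by
  have hds := D.ds_pos
  have key : ∀ u v : ℕ, u < v → D.sc u + D.ds/2 ≤ D.sc v - D.ds/2 := by
    intro u v huv
    unfold Disc.sc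
    have : ((u:ℝ) + 1) ≤ (v:ℝ) := by exact_mod_cast huv
    nlinarith
  unfold Disc.Spix
  rcases hne.lt_or_gt with h | h
  · exact Set.Ico_disjoint_Ico.mpr
      (le_trans (min_le_left _ _) (le_trans (key p p' h) (le_max_right _ _)))
  · exact Set.Ico_disjoint_Ico.mpr
      (le_trans (min_le_right _ _) (le_trans (key p' p h) (le_max_left _ _)))

lemma Disc.prodpix_disjoint (D : Disc) (z z' : ℕ × ℕ)
    (hz : z.1 < D.Nphi) (hz' : z'.1 < D.Nphi) (hne : z ≠ z') :
    Disjoint (D.Phipix z.1 ×ˢ D.Spix z.2) (D.Phipix z'.1 ×ˢ D.Spix z'.2) := by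
  rw [Set.disjoint_left]
  rintro ⟨a, b⟩ ⟨ha, hb⟩ ⟨ha', hb'⟩
  by_cases h : z.1 = z'.1
  · have hp : z.2 ≠ z'.2 := by
      intro h2; exact hne (Prod.ext h h2)
    exact Set.disjoint_left.mp (D.spix_disjoint z.2 z'.2 hp) hb hb'
  · exact Set.disjoint_left.mp (D.phipix_disjoint z.1 z'.1 hz hz' h) ha ha'

lemma Disc.vol_prodpix (D : Disc) (q p : ℕ) (hq : q < D.Nphi) :
    volume (D.Phipix q ×ˢ D.Spix p) = ENNReal.ofReal ((D.phihigh q - D.philow q) * D.ds) := by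
  rw [Measure.volume_eq_prod, Measure.prod_prod]
  unfold Disc.Phipix Disc.Spix
  rw [Real.volume_Ico, Real.volume_Ico]
  rw [← ENNReal.ofReal_mul (D.len_nonneg q hq)]
  congr 1
  ring

end AuxAng

section AuxCS

lemma sq_setIntegral_le {X : Type*} [MeasureSpace X] (A : Set X) (hA : MeasurableSet A)
    (hfin : volume A ≠ ∞) (f : X → ℝ) (hf : IntegrableOn f A)
    (hf2 : IntegrableOn (fun y => f y ^ 2) A) :
    (∫ y in A, f y) ^ 2 ≤ (volume A).toReal * ∫ y in A, f y ^ 2 := by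
  set V := (volume A).toReal with hV
  have hV0 : 0 ≤ V := ENNReal.toReal_nonneg
  rcases eq_or_lt_of_le hV0 with h0 | h0
  · have hzero : volume A = 0 := by
      have := (ENNReal.toReal_eq_zero_iff (volume A)).mp (by rw [← hV, ← h0])
      exact this.resolve_right hfin
    rw [Measure.restrict_eq_zero.mpr hzero]
    simp
  · set M := ∫ y in A, f y with hM
    set cc := M / V with hcc
    have hconst : IntegrableOn (fun _ : X => cc^2) A :=
      integrableOn_const hfin
    have hcf : IntegrableOn (fun y => 2 * cc * f y) A := (hf.const_mul (2*cc))
    have hexp : ∫ y in A, (f y - cc)^2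
        = (∫ y in A, f y^2) - 2 * cc * M + cc^2 * V := by
      have hpt : ∀ y, (f y - cc)^2 = (f y^2 - 2 * cc * f y) + cc^2 := by
        intro y; ring
      simp_rw [hpt]
      have hsub : IntegrableOn (fun y => f y ^ 2 - 2 * cc * f y) A := by
        exact hf2.sub hcf
      have h1 : ∫ y in A, (f y ^ 2 - 2 * cc * f y + cc ^ 2)
          = (∫ y in A, (f y ^ 2 - 2 * cc * f y)) + ∫ _y in A, (cc^2 : ℝ) := by
        exact integral_add hsub hconst
      have h2 : ∫ y in A, (f y ^ 2 - 2 * cc * f y)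
          = (∫ y in A, f y ^ 2) - ∫ y in A, 2 * cc * f y := by
        exact integral_sub hf2 hcf
      rw [h1, h2, MeasureTheory.integral_const_mul, setIntegral_const, smul_eq_mul, measureReal_def, ← hV, ← hM]
      ring
    have h0le : 0 ≤ ∫ y in A, (f y - cc)^2 := integral_nonneg (fun y => sq_nonneg _)
    rw [hexp] at h0le
    have hMV : 2 * cc * M - cc^2 * V = M^2 / V := by
      rw [hcc]; field_simp; ring
    have : M^2 / V ≤ ∫ y in A, f y^2 := by linarith
    calc M^2 = (M^2/V) * V := by field_simp
      _ ≤ (∫ y in A, f y^2) * V := mul_le_mul_of_nonneg_right this hV0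
      _ = V * ∫ y in A, f y^2 := by ring

end AuxCS
section AuxMore

lemma eLpNorm_two_sq {X : Type*} [MeasurableSpace X] (f : X → ℝ) (μ : Measure X) :
    eLpNorm f 2 μ ^ 2 = ∫⁻ x, ENNReal.ofReal (f x ^ 2) ∂μ := by
  rw [eLpNorm_eq_lintegral_rpow_enorm_toReal two_ne_zero ENNReal.ofNat_ne_top]
  have h2 : (2:ℝ≥0∞).toReal = (2:ℝ) := by norm_num
  rw [h2, ← ENNReal.rpow_natCast _ 2, ← ENNReal.rpow_mul]
  norm_num
  apply lintegral_congr
  intro x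
  rw [← ofReal_norm, ← ENNReal.ofReal_pow (norm_nonneg _),
    Real.norm_eq_abs, sq_abs]

lemma Disc.len_pos (D : Disc) (q : ℕ) (hq : q < D.Nphi) :
    0 < D.phihigh q - D.philow q := by
  have h1 := D.philow_le_ang q hq
  have h2 : D.ang q < D.phihigh q := by
    unfold Disc.phihigh
    by_cases h : q = D.Nphi - 1
    · rw [if_pos h]; exact (D.ang_mem q hq).2
    · rw [if_neg h]
      have : D.ang q < D.ang (q+1) := D.ang_mono q (q+1) (by omega) (by omega)
      linarith
  linarith

lemma Disc.xpix_eq (D : Disc) (i j : ℕ) :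
    D.Xpix i j = Icc ((i:ℝ)*D.dx - 1) (((i:ℝ)+1)*D.dx - 1)
      ×ˢ Icc ((j:ℝ)*D.dx - 1) (((j:ℝ)+1)*D.dx - 1) := by
  unfold Disc.Xpix Disc.xc
  congr 2 <;> ring

lemma sum_swap4 {M : Type*} [AddCommMonoid M] (R1 R2 Q P : Finset ℕ) (f : ℕ → ℕ → ℕ → ℕ → M) :
    ∑ i ∈ R1, ∑ j ∈ R2, ∑ q ∈ Q, ∑ p ∈ P, f i j q p
      = ∑ q ∈ Q, ∑ p ∈ P, ∑ i ∈ R1, ∑ j ∈ R2, f i j q p := by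
  calc ∑ i ∈ R1, ∑ j ∈ R2, ∑ q ∈ Q, ∑ p ∈ P, f i j q p
      = ∑ i ∈ R1, ∑ q ∈ Q, ∑ j ∈ R2, ∑ p ∈ P, f i j q p :=
        Finset.sum_congr rfl (fun i _ => Finset.sum_comm)
    _ = ∑ q ∈ Q, ∑ i ∈ R1, ∑ j ∈ R2, ∑ p ∈ P, f i j q p := Finset.sum_comm
    _ = ∑ q ∈ Q, ∑ i ∈ R1, ∑ p ∈ P, ∑ j ∈ R2, f i j q p :=
        Finset.sum_congr rfl (fun q _ => Finset.sum_congr rfl (fun i _ => Finset.sum_comm))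
    _ = ∑ q ∈ Q, ∑ p ∈ P, ∑ i ∈ R1, ∑ j ∈ R2, f i j q p :=
        Finset.sum_congr rfl (fun q _ => Finset.sum_comm)

end AuxMore
/-- uniform `L²` bound for the pixel-driven backprojection when `δ_x/δ_s ≤ c`. -/
theorem pixelBackproj_uniformly_bounded (c : ℝ) (hc : 0 < c) (D : Disc) (hr : D.dx / D.ds ≤ c)
    (g : ℝ × ℝ → ℝ) (hg : MemLp g 2 (volume.restrict Sino))
    (hsupp : ∀ y, y ∉ Sino → g y = 0) :
    eLpNorm (D.discBackproj (fun _ t => wpd D.ds t) g) 2 (volume.restrict Omg) ^ 2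
      ≤ ENNReal.ofReal (4 * Real.sqrt 2 * π * (c + 1)) *
          eLpNorm g 2 (volume.restrict Sino) ^ 2 := by
  classical
  have hdx := D.dx_pos
  have hds := D.ds_pos
  have measSino : MeasurableSet Sino := measurableSet_Ico.prod measurableSet_Ioo
  have measU : ∀ q p : ℕ, MeasurableSet (D.Phipix q ×ˢ D.Spix p) :=
    fun q p => measurableSet_Ico.prod measurableSet_Ico
  have hvolU : ∀ q p : ℕ, q < D.Nphi →
      volume (D.Phipix q ×ˢ D.Spix p) = ENNReal.ofReal ((D.phihigh q - D.philow q) * D.ds) :=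
    fun q p hq => D.vol_prodpix q p hq
  -- global L² membership of g
  have hgind : g = Sino.indicator g := by
    funext y
    by_cases h : y ∈ Sino
    · rw [Set.indicator_of_mem h]
    · rw [Set.indicator_of_notMem h, hsupp y h]
  have hmg : MemLp g 2 volume := by
    rw [hgind]; exact (memLp_indicator_iff_restrict measSino).mpr hg
  have hint2 : Integrable (fun y => g y ^ 2) volume := hmg.integrable_sq
  have hintOn : ∀ A : Set (ℝ×ℝ), MeasurableSet A → volume A ≠ ∞ → IntegrableOn g A := by
    intro A hA hfin
    haveI : IsFiniteMeasure (volume.restrict A) :=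
      ⟨by rw [Measure.restrict_apply_univ]; exact lt_top_iff_ne_top.mpr hfin⟩
    exact memLp_one_iff_integrable.mp
      ((hmg.restrict A).mono_exponent (by norm_num : (1:ℝ≥0∞) ≤ 2))
  -- abbreviations
  have hA : True := trivial
  let A : ℕ → ℕ → ℝ := fun i j => ∑ q ∈ Finset.range D.Nphi, ∑ p ∈ Finset.range D.Ns,
    wpd D.ds (D.off i j q p) * ∫ y in D.Phipix q ×ˢ D.Spix p, g y
  let II : ℕ → ℕ → ℝ := fun q p => ∫ y in D.Phipix q ×ˢ D.Spix p, g y ^ 2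
  let T : ℝ := ∑ i ∈ Finset.range D.Nx, ∑ j ∈ Finset.range D.Nx, D.dx^2 * (A i j)^2
  have hIInonneg : ∀ q p, 0 ≤ II q p := fun q p => integral_nonneg (fun y => sq_nonneg _)
  -- integral of g² over Sino equals global integral
  have hSino_int : ∫ y, g y ^ 2 = ∫ y in Sino, g y ^ 2 := by
    rw [← integral_indicator measSino]
    congr 1
    funext y
    by_cases h : y ∈ Sino
    · rw [Set.indicator_of_mem h]
    · rw [Set.indicator_of_notMem h, hsupp y h]; ring
  have hSino_nonneg : 0 ≤ ∫ y in Sino, g y ^ 2 := integral_nonneg (fun y => sq_nonneg _)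
  ----------------------------------------------------------------
  -- STEP 2 : the right-hand side
  ----------------------------------------------------------------
  have hRHS : eLpNorm g 2 (volume.restrict Sino) ^ 2
      = ENNReal.ofReal (∫ y in Sino, g y ^ 2) := by
    rw [eLpNorm_two_sq]
    rw [MeasureTheory.ofReal_integral_eq_lintegral_ofReal hint2.integrableOn
      (Filter.Eventually.of_forall (fun y => sq_nonneg _))]
  ----------------------------------------------------------------
  -- STEP 3 : the key real estimate  T ≤ 4√2·π·(c+1)·∫_Sino g²
  ----------------------------------------------------------------
  -- Cauchy–Schwarz on each cell
  have hCScell : ∀ q p : ℕ, q < D.Nphi →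
      (∫ y in D.Phipix q ×ˢ D.Spix p, g y) ^ 2
        ≤ ((D.phihigh q - D.philow q) * D.ds) * II q p := by
    intro q p hq
    have hfin : volume (D.Phipix q ×ˢ D.Spix p) ≠ ∞ := by
      rw [hvolU q p hq]; exact ENNReal.ofReal_ne_top
    have := sq_setIntegral_le (D.Phipix q ×ˢ D.Spix p) (measU q p) hfin g
      (hintOn _ (measU q p) hfin) hint2.integrableOn
    rwa [hvolU q p hq, ENNReal.toReal_ofReal
      (mul_nonneg (D.len_nonneg q hq) hds.le)] at this
  -- the per-pixel Cauchy–Schwarz estimate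
  have hAsq : ∀ i j : ℕ, (A i j)^2 ≤ π * ∑ q ∈ Finset.range D.Nphi, ∑ p ∈ Finset.range D.Ns,
      wpd D.ds (D.off i j q p) * II q p := by
    intro i j
    set s : Finset (ℕ × ℕ) := (Finset.range D.Nphi) ×ˢ (Finset.range D.Ns) with hs
    set w : ℕ × ℕ → ℝ := fun z => wpd D.ds (D.off i j z.1 z.2) with hw
    set m : ℕ × ℕ → ℝ := fun z => (D.phihigh z.1 - D.philow z.1) * D.ds with hm
    set G : ℕ × ℕ → ℝ := fun z => ∫ y in D.Phipix z.1 ×ˢ D.Spix z.2, g y with hG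
    have hwpos : ∀ z, 0 ≤ w z := fun z => wpd_nonneg _ _
    have hmpos : ∀ z : ℕ × ℕ, z ∈ s → 0 < m z := by
      intro z hz
      rw [hs, Finset.mem_product] at hz
      exact mul_pos (D.len_pos z.1 (Finset.mem_range.mp hz.1)) hds
    have hflat : A i j = ∑ z ∈ s, w z * G z := by
      rw [Finset.sum_product]
    have habs : |A i j| ≤ ∑ z ∈ s, w z * |G z| := by
      rw [hflat]
      refine le_trans (Finset.abs_sum_le_sum_abs _ _) ?_
      apply Finset.sum_le_sum
      intro z _
      rw [abs_mul, abs_of_nonneg (hwpos z)]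
    have hsq : (∑ z ∈ s, w z * |G z|)^2
        ≤ (∑ z ∈ s, w z * m z) * (∑ z ∈ s, (w z / m z) * (G z)^2) := by
      have hterm : ∀ z ∈ s, w z * |G z|
          = Real.sqrt (w z * m z) * (Real.sqrt (w z / m z) * |G z|) := by
        intro z hz
        have hmz := hmpos z hz
        rw [show Real.sqrt (w z * m z) * (Real.sqrt (w z / m z) * |G z|)
          = (Real.sqrt (w z * m z) * Real.sqrt (w z / m z)) * |G z| by ring]
        congr 1
        rw [← Real.sqrt_mul (mul_nonneg (hwpos z) hmz.le)]
        rw [show w z * m z * (w z / m z) = (w z)^2 * (m z / m z) by ring, div_self hmz.ne',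
          mul_one, Real.sqrt_sq (hwpos z)]
      rw [Finset.sum_congr rfl hterm]
      refine le_trans (Finset.sum_mul_sq_le_sq_mul_sq s _ _) ?_
      apply le_of_eq
      congr 1
      · apply Finset.sum_congr rfl
        intro z hz
        rw [Real.sq_sqrt (mul_nonneg (hwpos z) (hmpos z hz).le)]
      · apply Finset.sum_congr rfl
        intro z hz
        rw [mul_pow, Real.sq_sqrt (div_nonneg (hwpos z) (hmpos z hz).le), sq_abs]
    have hS1 : ∑ z ∈ s, w z * m z ≤ π := by
      rw [hs, Finset.sum_product]
      have hq1 : ∀ q ∈ Finset.range D.Nphi,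
          ∑ p ∈ Finset.range D.Ns, w (q, p) * m (q, p)
            ≤ D.phihigh q - D.philow q := by
        intro q hq
        have hqlt := Finset.mem_range.mp hq
        have hlen := D.len_nonneg q hqlt
        calc ∑ p ∈ Finset.range D.Ns, w (q, p) * m (q, p)
            = ((D.phihigh q - D.philow q) * D.ds)
                * ∑ p ∈ Finset.range D.Ns, wpd D.ds (D.off i j q p) := by
              rw [Finset.mul_sum]
              apply Finset.sum_congr rfl
              intro p _
              rw [hw, hm]
              ring
          _ ≤ ((D.phihigh q - D.philow q) * D.ds) * (1 / D.ds) := by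
              apply mul_le_mul_of_nonneg_left _ (mul_nonneg hlen hds.le)
              have : ∀ p : ℕ, D.off i j q p
                  = ((D.xc i j).1 * Real.cos (D.ang q) + (D.xc i j).2 * Real.sin (D.ang q))
                    - D.sc p := fun p => rfl
              simp_rw [this]
              exact sum_wpd_sc_le D _
          _ = D.phihigh q - D.philow q := by field_simp
      calc ∑ q ∈ Finset.range D.Nphi, ∑ p ∈ Finset.range D.Ns, w (q, p) * m (q, p)
          ≤ ∑ q ∈ Finset.range D.Nphi, (D.phihigh q - D.philow q) :=
            Finset.sum_le_sum hq1
        _ = π := D.sum_len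
    have hS2 : ∑ z ∈ s, (w z / m z) * (G z)^2 ≤ ∑ z ∈ s, w z * II z.1 z.2 := by
      apply Finset.sum_le_sum
      intro z hz
      have hmz := hmpos z hz
      have hzq : z.1 < D.Nphi := by
        rw [hs, Finset.mem_product] at hz
        exact Finset.mem_range.mp hz.1
      have hG2 : (G z)^2 ≤ m z * II z.1 z.2 := hCScell z.1 z.2 hzq
      calc (w z / m z) * (G z)^2 ≤ (w z / m z) * (m z * II z.1 z.2) :=
            mul_le_mul_of_nonneg_left hG2 (div_nonneg (hwpos z) hmz.le)
        _ = w z * II z.1 z.2 := by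
            field_simp
    have hS2nonneg : 0 ≤ ∑ z ∈ s, w z * II z.1 z.2 :=
      Finset.sum_nonneg (fun z _ => mul_nonneg (hwpos z) (hIInonneg z.1 z.2))
    have hS2nonneg' : 0 ≤ ∑ z ∈ s, (w z / m z) * (G z)^2 :=
      Finset.sum_nonneg (fun z hz =>
        mul_nonneg (div_nonneg (hwpos z) (hmpos z hz).le) (sq_nonneg _))
    have hS1nonneg : 0 ≤ ∑ z ∈ s, w z * m z :=
      Finset.sum_nonneg (fun z hz => mul_nonneg (hwpos z) (hmpos z hz).le)
    calc (A i j)^2 = |A i j|^2 := (sq_abs _).symm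
      _ ≤ (∑ z ∈ s, w z * |G z|)^2 := by
          apply pow_le_pow_left₀ (abs_nonneg _) habs _
      _ ≤ (∑ z ∈ s, w z * m z) * (∑ z ∈ s, (w z / m z) * (G z)^2) := hsq
      _ ≤ π * (∑ z ∈ s, (w z / m z) * (G z)^2) :=
          mul_le_mul_of_nonneg_right hS1 hS2nonneg'
      _ ≤ π * (∑ z ∈ s, w z * II z.1 z.2) :=
          mul_le_mul_of_nonneg_left hS2 Real.pi_pos.le
      _ = π * ∑ q ∈ Finset.range D.Nphi, ∑ p ∈ Finset.range D.Ns,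
            wpd D.ds (D.off i j q p) * II q p := by
          rw [hs, Finset.sum_product]
  -- sum over pixels, swap the sums, and use the grid-count estimate
  have hIIsum : ∑ q ∈ Finset.range D.Nphi, ∑ p ∈ Finset.range D.Ns, II q p
      ≤ ∫ y in Sino, g y ^ 2 := by
    set s : Finset (ℕ × ℕ) := (Finset.range D.Nphi) ×ˢ (Finset.range D.Ns) with hs
    have h1 : ∑ q ∈ Finset.range D.Nphi, ∑ p ∈ Finset.range D.Ns, II q p
        = ∑ z ∈ s, ∫ y in D.Phipix z.1 ×ˢ D.Spix z.2, g y ^ 2 := by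
      rw [hs, Finset.sum_product]
    rw [h1]
    have hdisj : (↑s : Set (ℕ×ℕ)).Pairwise
        (Function.onFun Disjoint (fun z : ℕ × ℕ => D.Phipix z.1 ×ˢ D.Spix z.2)) := by
      intro z hz z' hz' hne
      rw [hs, Finset.coe_product, Set.mem_prod] at hz hz'
      exact D.prodpix_disjoint z z'
        (Finset.mem_coe.mp hz.1 |> Finset.mem_range.mp)
        (Finset.mem_coe.mp hz'.1 |> Finset.mem_range.mp) hne
    rw [← integral_biUnion_finset s (fun z _ => measU z.1 z.2) hdisj
      (fun z _ => hint2.integrableOn)]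
    rw [← hSino_int]
    exact setIntegral_le_integral hint2 (Filter.Eventually.of_forall (fun y => sq_nonneg _))
  have hTbound : T ≤ 4 * Real.sqrt 2 * π * (c + 1) * ∫ y in Sino, g y ^ 2 := by
    have hgrid : ∀ q p : ℕ,
        D.dx^2 * ∑ i ∈ Finset.range D.Nx, ∑ j ∈ Finset.range D.Nx, wpd D.ds (D.off i j q p)
          ≤ 4 * Real.sqrt 2 + 2 * c := by
      intro q p
      refine le_trans (dx2_sum_wpd_le D q p) ?_
      have : 2 * (D.dx / D.ds) ≤ 2 * c := by linarith
      linarith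
    have step1 : T ≤ π * ∑ i ∈ Finset.range D.Nx, ∑ j ∈ Finset.range D.Nx,
        D.dx^2 * ∑ q ∈ Finset.range D.Nphi, ∑ p ∈ Finset.range D.Ns,
          wpd D.ds (D.off i j q p) * II q p := by
      rw [Finset.mul_sum]
      apply Finset.sum_le_sum
      intro i _
      rw [Finset.mul_sum]
      apply Finset.sum_le_sum
      intro j _
      calc D.dx^2 * (A i j)^2
          ≤ D.dx^2 * (π * ∑ q ∈ Finset.range D.Nphi, ∑ p ∈ Finset.range D.Ns,
              wpd D.ds (D.off i j q p) * II q p) :=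
            mul_le_mul_of_nonneg_left (hAsq i j) (by positivity)
        _ = π * (D.dx^2 * ∑ q ∈ Finset.range D.Nphi, ∑ p ∈ Finset.range D.Ns,
              wpd D.ds (D.off i j q p) * II q p) := by ring
    have step2 : ∑ i ∈ Finset.range D.Nx, ∑ j ∈ Finset.range D.Nx,
        D.dx^2 * ∑ q ∈ Finset.range D.Nphi, ∑ p ∈ Finset.range D.Ns,
          wpd D.ds (D.off i j q p) * II q p
        = ∑ q ∈ Finset.range D.Nphi, ∑ p ∈ Finset.range D.Ns,
            (D.dx^2 * ∑ i ∈ Finset.range D.Nx, ∑ j ∈ Finset.range D.Nx,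
              wpd D.ds (D.off i j q p)) * II q p := by
      have e1 : ∀ i j : ℕ, D.dx^2 * ∑ q ∈ Finset.range D.Nphi, ∑ p ∈ Finset.range D.Ns,
          wpd D.ds (D.off i j q p) * II q p
          = ∑ q ∈ Finset.range D.Nphi, ∑ p ∈ Finset.range D.Ns,
            D.dx^2 * (wpd D.ds (D.off i j q p) * II q p) := by
        intro i j
        rw [Finset.mul_sum]
        apply Finset.sum_congr rfl
        intro q _
        rw [Finset.mul_sum]
      simp_rw [e1]
      rw [sum_swap4]
      apply Finset.sum_congr rfl
      intro q _
      apply Finset.sum_congr rfl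
      intro p _
      simp only [Finset.mul_sum, Finset.sum_mul]
      apply Finset.sum_congr rfl
      intro i _
      apply Finset.sum_congr rfl
      intro j _
      ring
    have step3 : ∑ q ∈ Finset.range D.Nphi, ∑ p ∈ Finset.range D.Ns,
        (D.dx^2 * ∑ i ∈ Finset.range D.Nx, ∑ j ∈ Finset.range D.Nx,
          wpd D.ds (D.off i j q p)) * II q p
        ≤ (4 * Real.sqrt 2 + 2 * c) * ∑ q ∈ Finset.range D.Nphi, ∑ p ∈ Finset.range D.Ns,
            II q p := by
      rw [Finset.mul_sum]
      apply Finset.sum_le_sum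
      intro q _
      rw [Finset.mul_sum]
      apply Finset.sum_le_sum
      intro p _
      exact mul_le_mul_of_nonneg_right (hgrid q p) (hIInonneg q p)
    have hconst : π * (4 * Real.sqrt 2 + 2 * c) ≤ 4 * Real.sqrt 2 * π * (c + 1) := by
      have h1 : 2 * c ≤ 4 * Real.sqrt 2 * c := by nlinarith [one_le_sqrt_two]
      have h2 : 4 * Real.sqrt 2 + 2 * c ≤ 4 * Real.sqrt 2 * (c + 1) := by nlinarith
      calc π * (4 * Real.sqrt 2 + 2 * c) ≤ π * (4 * Real.sqrt 2 * (c + 1)) :=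
            mul_le_mul_of_nonneg_left h2 Real.pi_pos.le
        _ = 4 * Real.sqrt 2 * π * (c + 1) := by ring
    have hsumnn : 0 ≤ ∑ q ∈ Finset.range D.Nphi, ∑ p ∈ Finset.range D.Ns, II q p :=
      Finset.sum_nonneg (fun q _ => Finset.sum_nonneg (fun p _ => hIInonneg q p))
    calc T ≤ π * ∑ i ∈ Finset.range D.Nx, ∑ j ∈ Finset.range D.Nx,
          D.dx^2 * ∑ q ∈ Finset.range D.Nphi, ∑ p ∈ Finset.range D.Ns,
            wpd D.ds (D.off i j q p) * II q p := step1
      _ = π * ∑ q ∈ Finset.range D.Nphi, ∑ p ∈ Finset.range D.Ns,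
            (D.dx^2 * ∑ i ∈ Finset.range D.Nx, ∑ j ∈ Finset.range D.Nx,
              wpd D.ds (D.off i j q p)) * II q p := by rw [step2]
      _ ≤ π * ((4 * Real.sqrt 2 + 2 * c) * ∑ q ∈ Finset.range D.Nphi,
            ∑ p ∈ Finset.range D.Ns, II q p) :=
          mul_le_mul_of_nonneg_left step3 Real.pi_pos.le
      _ = (π * (4 * Real.sqrt 2 + 2 * c)) * ∑ q ∈ Finset.range D.Nphi,
            ∑ p ∈ Finset.range D.Ns, II q p := by ring
      _ ≤ (4 * Real.sqrt 2 * π * (c + 1)) * ∑ q ∈ Finset.range D.Nphi,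
            ∑ p ∈ Finset.range D.Ns, II q p :=
          mul_le_mul_of_nonneg_right hconst hsumnn
      _ ≤ 4 * Real.sqrt 2 * π * (c + 1) * ∫ y in Sino, g y ^ 2 := by
          apply mul_le_mul_of_nonneg_left hIIsum
          have := one_le_sqrt_two
          nlinarith [Real.pi_pos]
  ----------------------------------------------------------------
  -- STEP 1 : the left-hand side is at most ofReal T
  ----------------------------------------------------------------
  have measX : ∀ i j : ℕ, MeasurableSet (D.Xpix i j) :=
    fun i j => measurableSet_Icc.prod measurableSet_Icc
  have hLHS : eLpNorm (D.discBackproj (fun _ t => wpd D.ds t) g) 2 (volume.restrict Omg) ^ 2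
      ≤ ENNReal.ofReal T := by
    have hform : ∀ x : ℝ×ℝ, D.discBackproj (fun _ t => wpd D.ds t) g x
        = ∑ i ∈ Finset.range D.Nx, ∑ j ∈ Finset.range D.Nx,
            Set.indicator (D.Xpix i j) (fun _ => (1:ℝ)) x * A i j := fun x => rfl
    rw [eLpNorm_two_sq]
    refine le_trans (setLIntegral_le_lintegral _ _) ?_
    set gl : Set (ℝ×ℝ) := ⋃ (k : ℕ),
      ({x : ℝ×ℝ | x.1 = (k:ℝ) * D.dx - 1} ∪ {x : ℝ×ℝ | x.2 = (k:ℝ) * D.dx - 1}) with hgl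
    have hglnull : volume gl = 0 := by
      rw [hgl]
      apply measure_iUnion_null
      intro k
      apply measure_union_null
      · have he : {x : ℝ×ℝ | x.1 = (k:ℝ) * D.dx - 1}
            = {(k:ℝ) * D.dx - 1} ×ˢ (univ : Set ℝ) := by
          ext x
          constructor
          · intro h; exact ⟨h, trivial⟩
          · intro h; exact h.1
        rw [he, Measure.volume_eq_prod, Measure.prod_prod]
        simp
      · have he : {x : ℝ×ℝ | x.2 = (k:ℝ) * D.dx - 1}
            = (univ : Set ℝ) ×ˢ {(k:ℝ) * D.dx - 1} := by
          ext x
          constructor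
          · intro h; exact ⟨trivial, h⟩
          · intro h; exact h.2
        rw [he, Measure.volume_eq_prod, Measure.prod_prod]
        simp
    have key1 : ∀ a : ℝ, (∀ k : ℕ, a ≠ (k:ℝ) * D.dx - 1) → ∀ u v : ℕ,
        a ∈ Icc ((u:ℝ)*D.dx - 1) (((u:ℝ)+1)*D.dx - 1) →
        a ∈ Icc ((v:ℝ)*D.dx - 1) (((v:ℝ)+1)*D.dx - 1) → u = v := by
      intro a ha u v hu hv
      by_contra hne
      rcases Nat.lt_or_ge u v with h | h
      · have h1 : ((u:ℝ)+1) ≤ (v:ℝ) := by exact_mod_cast h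
        have heq : a = ((u:ℝ)+1) * D.dx - 1 := by
          have h2 := hu.2
          have h3 := hv.1
          nlinarith [hdx]
        exact ha (u+1) (by push_cast; linarith)
      · have hvu : v < u := by omega
        have h1 : ((v:ℝ)+1) ≤ (u:ℝ) := by exact_mod_cast hvu
        have heq : a = ((v:ℝ)+1) * D.dx - 1 := by
          have h2 := hv.2
          have h3 := hu.1
          nlinarith [hdx]
        exact ha (v+1) (by push_cast; linarith)
    have hptwise : ∀ x : ℝ×ℝ, x ∉ gl →
        ENNReal.ofReal ((D.discBackproj (fun _ t => wpd D.ds t) g) x ^ 2)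
          ≤ ∑ i ∈ Finset.range D.Nx, ∑ j ∈ Finset.range D.Nx,
              (D.Xpix i j).indicator (fun _ => ENNReal.ofReal ((A i j)^2)) x := by
      intro x hx
      have hx1 : ∀ k : ℕ, x.1 ≠ (k:ℝ) * D.dx - 1 := by
        intro k h
        exact hx (mem_iUnion.mpr ⟨k, Or.inl h⟩)
      have hx2 : ∀ k : ℕ, x.2 ≠ (k:ℝ) * D.dx - 1 := by
        intro k h
        exact hx (mem_iUnion.mpr ⟨k, Or.inr h⟩)
      by_cases hcov : ∃ i, i < D.Nx ∧ ∃ j, j < D.Nx ∧ x ∈ D.Xpix i j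
      · obtain ⟨i, hi, j, hj, hxij⟩ := hcov
        have huniq : ∀ i' j' : ℕ, x ∈ D.Xpix i' j' → i' = i ∧ j' = j := by
          intro i' j' hx'
          rw [D.xpix_eq] at hx' hxij
          exact ⟨key1 x.1 hx1 i' i hx'.1 hxij.1, key1 x.2 hx2 j' j hx'.2 hxij.2⟩
        have hval : D.discBackproj (fun _ t => wpd D.ds t) g x = A i j := by
          rw [hform]
          rw [Finset.sum_eq_single_of_mem i (Finset.mem_range.mpr hi)]
          · rw [Finset.sum_eq_single_of_mem j (Finset.mem_range.mpr hj)]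
            · rw [Set.indicator_of_mem hxij, one_mul]
            · intro j' _ hne
              rw [Set.indicator_of_notMem, zero_mul]
              intro hmem
              exact hne (huniq i j' hmem).2
          · intro i' _ hne
            apply Finset.sum_eq_zero
            intro j' _
            rw [Set.indicator_of_notMem, zero_mul]
            intro hmem
            exact hne (huniq i' j' hmem).1
        rw [hval]
        calc ENNReal.ofReal ((A i j)^2)
            = (D.Xpix i j).indicator (fun _ => ENNReal.ofReal ((A i j)^2)) x := by
              rw [Set.indicator_of_mem hxij]
          _ ≤ ∑ j' ∈ Finset.range D.Nx,
                (D.Xpix i j').indicator (fun _ => ENNReal.ofReal ((A i j')^2)) x :=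
              Finset.single_le_sum
                (f := fun j' => (D.Xpix i j').indicator
                  (fun _ => ENNReal.ofReal ((A i j')^2)) x)
                (fun j' _ => zero_le) (Finset.mem_range.mpr hj)
          _ ≤ ∑ i' ∈ Finset.range D.Nx, ∑ j' ∈ Finset.range D.Nx,
                (D.Xpix i' j').indicator (fun _ => ENNReal.ofReal ((A i' j')^2)) x :=
              Finset.single_le_sum
                (f := fun i' => ∑ j' ∈ Finset.range D.Nx,
                  (D.Xpix i' j').indicator (fun _ => ENNReal.ofReal ((A i' j')^2)) x)
                (fun i' _ => zero_le) (Finset.mem_range.mpr hi)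
      · push_neg at hcov
        have hval : D.discBackproj (fun _ t => wpd D.ds t) g x = 0 := by
          rw [hform]
          apply Finset.sum_eq_zero
          intro i hi
          apply Finset.sum_eq_zero
          intro j hj
          rw [Set.indicator_of_notMem, zero_mul]
          exact hcov i (Finset.mem_range.mp hi) j (Finset.mem_range.mp hj)
        have h0 : ENNReal.ofReal ((0:ℝ)^2) = 0 := by norm_num
        rw [hval, h0]
        exact zero_le
    have hae : ∀ᵐ x : ℝ×ℝ,
        ENNReal.ofReal ((D.discBackproj (fun _ t => wpd D.ds t) g) x ^ 2)
          ≤ ∑ i ∈ Finset.range D.Nx, ∑ j ∈ Finset.range D.Nx,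
              (D.Xpix i j).indicator (fun _ => ENNReal.ofReal ((A i j)^2)) x := by
      rw [ae_iff]
      apply measure_mono_null _ hglnull
      intro x hx
      simp only [mem_setOf_eq] at hx
      by_contra h2
      exact hx (hptwise x h2)
    refine le_trans (lintegral_mono_ae hae) ?_
    rw [lintegral_finset_sum _ (fun i _ => Finset.measurable_sum _
      (fun j _ => measurable_const.indicator (measX i j)))]
    have hXvol : ∀ i j : ℕ,
        volume (D.Xpix i j) = ENNReal.ofReal (D.dx) * ENNReal.ofReal (D.dx) := by
      intro i j
      rw [D.xpix_eq, Measure.volume_eq_prod, Measure.prod_prod,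
        Real.volume_Icc, Real.volume_Icc]
      congr 2 <;> ring
    have hterm : ∀ i j : ℕ,
        ∫⁻ x, (D.Xpix i j).indicator (fun _ => ENNReal.ofReal ((A i j)^2)) x
          = ENNReal.ofReal (D.dx^2 * (A i j)^2) := by
      intro i j
      rw [lintegral_indicator (measX i j), setLIntegral_const, hXvol i j,
        ← ENNReal.ofReal_mul hdx.le, ← ENNReal.ofReal_mul (sq_nonneg (A i j))]
      congr 1
      ring
    have hfinal : ∑ i ∈ Finset.range D.Nx, ∫⁻ x, ∑ j ∈ Finset.range D.Nx,
        (D.Xpix i j).indicator (fun _ => ENNReal.ofReal ((A i j)^2)) x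
          = ENNReal.ofReal T := by
      have e1 : ∀ i : ℕ, ∫⁻ x, ∑ j ∈ Finset.range D.Nx,
          (D.Xpix i j).indicator (fun _ => ENNReal.ofReal ((A i j)^2)) x
            = ∑ j ∈ Finset.range D.Nx, ENNReal.ofReal (D.dx^2 * (A i j)^2) := by
        intro i
        rw [lintegral_finset_sum _ (fun j _ => measurable_const.indicator (measX i j))]
        exact Finset.sum_congr rfl (fun j _ => hterm i j)
      rw [Finset.sum_congr rfl (fun i _ => e1 i)]
      rw [ENNReal.ofReal_sum_of_nonneg (fun i _ => Finset.sum_nonneg (fun j _ => by positivity))]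
      apply Finset.sum_congr rfl
      intro i _
      exact (ENNReal.ofReal_sum_of_nonneg (fun j _ => by positivity)).symm
    exact le_of_eq hfinal
  calc eLpNorm (D.discBackproj (fun _ t => wpd D.ds t) g) 2 (volume.restrict Omg) ^ 2
      ≤ ENNReal.ofReal T := hLHS
    _ ≤ ENNReal.ofReal (4 * Real.sqrt 2 * π * (c + 1) * ∫ y in Sino, g y ^ 2) :=
        ENNReal.ofReal_le_ofReal hTbound
    _ = ENNReal.ofReal (4 * Real.sqrt 2 * π * (c + 1))
          * ENNReal.ofReal (∫ y in Sino, g y ^ 2) := by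
        rw [ENNReal.ofReal_mul (by positivity)]
    _ = ENNReal.ofReal (4 * Real.sqrt 2 * π * (c + 1)) *
          eLpNorm g 2 (volume.restrict Sino) ^ 2 := by rw [hRHS]
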